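/- Let X, Y, Z be independent real Gaussian random variables (mean 0, variance 1−t for fixed t ∈ [0,1)), and fix reals x, y, z. Define g(x,y) = E[ N(X+x | Z+z, 1) · N(Y+y | Z+z, 1) / ( N(X+x | 0,1) · N(Y+y | 0,1) ) ], where N(a|μ,σ²) denotes the Gaussian density. Then in general g(x,y) does not factor as a product g₁(x)·g₂(y): there exist t, z and points x,y,x',y' with g(x,y)·g(x',y') ≠ g(x,y')·g(x',y). -/

import Mathlib

open MeasureTheory Real

/-- Gaussian density `N(a | μ, σ²)`. -/
noncomputable def gaussPdf (a μ σ2 : ℝ) : ℝ :=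
  (Real.sqrt (2 * Real.pi * σ2))⁻¹ * Real.exp (-((a - μ) ^ 2) / (2 * σ2))

/-- `gRatio t z x y = E[ N(X+x|Z+z,1)·N(Y+y|Z+z,1) / (N(X+x|0,1)·N(Y+y|0,1)) ]`, the
expectation over independent `X, Y, Z ∼ N(0, 1−t)`, written as an integral against the
product Gaussian density. -/
noncomputable def gRatio (t z x y : ℝ) : ℝ :=
  ∫ p : ℝ × ℝ × ℝ,
    (gaussPdf (p.1 + x) (p.2.2 + z) 1 * gaussPdf (p.2.1 + y) (p.2.2 + z) 1 /
      (gaussPdf (p.1 + x) 0 1 * gaussPdf (p.2.1 + y) 0 1)) *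
    (gaussPdf p.1 0 (1 - t) * gaussPdf p.2.1 0 (1 - t) * gaussPdf p.2.2 0 (1 - t))

/- auxiliary lemmas -/


lemma expQuad_eq (b c : ℝ) (hb : 0 < b) :
    (fun w : ℝ => Real.exp (-(b * w ^ 2) + c * w)) =
      fun w : ℝ => Real.exp (c ^ 2 / (4 * b)) * Real.exp (-b * (w - c / (2 * b)) ^ 2) := by
  funext w
  rw [← Real.exp_add]
  congr 1
  field_simp
  ring

lemma integrable_expQuad (b c : ℝ) (hb : 0 < b) :
    Integrable (fun w : ℝ => Real.exp (-(b * w ^ 2) + c * w)) := by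
  rw [expQuad_eq b c hb]
  exact ((integrable_exp_neg_mul_sq hb).comp_sub_right (c / (2 * b))).const_mul _

lemma integral_expQuad (b c : ℝ) (hb : 0 < b) :
    (∫ w : ℝ, Real.exp (-(b * w ^ 2) + c * w)) =
      Real.sqrt (π / b) * Real.exp (c ^ 2 / (4 * b)) := by
  rw [expQuad_eq b c hb, integral_const_mul,
    integral_sub_right_eq_self (fun w => Real.exp (-b * w ^ 2)) (c / (2 * b)),
    integral_gaussian, mul_comm]

lemma collect (c e1 e2 e3 e4 e5 e6 e7 E : ℝ) (hc : 0 < c)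
    (h : e1 + e2 + e5 + e6 + e7 = E + (e3 + e4)) :
    c * Real.exp e1 * (c * Real.exp e2) / (c * Real.exp e3 * (c * Real.exp e4)) *
      (c * Real.exp e5 * (c * Real.exp e6) * (c * Real.exp e7)) = c ^ 3 * Real.exp E := by
  have hE : E = e1 + e2 + e5 + e6 + e7 - (e3 + e4) := by linarith
  subst hE
  have h3 : c * Real.exp e3 * (c * Real.exp e4) ≠ 0 := by positivity
  rw [div_mul_eq_mul_div, div_eq_iff h3, Real.exp_sub, Real.exp_add, Real.exp_add,
    Real.exp_add, Real.exp_add]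
  have := Real.exp_ne_zero (e3 + e4)
  field_simp
  rw [Real.exp_add]

lemma exp_shuffle (K A B C D : ℝ) (h : A + B = C + D) :
    Real.exp A * (K * Real.exp B) = K * Real.exp C * Real.exp D := by
  have h2 : Real.exp A * Real.exp B = Real.exp C * Real.exp D := by
    rw [← Real.exp_add, ← Real.exp_add, h]
  calc Real.exp A * (K * Real.exp B) = K * (Real.exp A * Real.exp B) := by ring
    _ = K * (Real.exp C * Real.exp D) := by rw [h2]
    _ = K * Real.exp C * Real.exp D := by ring

lemma exp_shuffle2 (K1 K2 A B C D : ℝ) (h : A + B = C + D) :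
    (K1 * Real.exp A) * (K2 * Real.exp B) = K1 * K2 * Real.exp C * Real.exp D := by
  have h2 : Real.exp A * Real.exp B = Real.exp C * Real.exp D := by
    rw [← Real.exp_add, ← Real.exp_add, h]
  calc (K1 * Real.exp A) * (K2 * Real.exp B) = K1 * K2 * (Real.exp A * Real.exp B) := by ring
    _ = K1 * K2 * (Real.exp C * Real.exp D) := by rw [h2]
    _ = K1 * K2 * Real.exp C * Real.exp D := by ring

lemma exp_shuffle3 (K1 K2 A B C : ℝ) (h : A + B = C) :
    K1 * Real.exp A * (K2 * Real.exp B) = K1 * K2 * Real.exp C := by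
  rw [← h, Real.exp_add]; ring

/-- The integrand after simplification (case `t = 0`, `z = 0`). -/
noncomputable def Gfun (x y : ℝ) (p : ℝ × ℝ × ℝ) : ℝ :=
  Real.exp (-(p.1 ^ 2 / 2) + p.1 * p.2.2 + x * p.2.2) *
    (Real.exp (-(p.2.1 ^ 2 / 2) + p.2.1 * p.2.2 + y * p.2.2) *
      Real.exp (-(3 / 2 * p.2.2 ^ 2)))

lemma Gfun_cont (x y : ℝ) : Continuous (Gfun x y) := by
  unfold Gfun; fun_prop

lemma Gfun_integrable (x y : ℝ) : Integrable (Gfun x y) := by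
  have hb : Integrable (fun p : ℝ × ℝ × ℝ =>
      Real.exp (-(1/8 * p.1 ^ 2) + 0 * p.1) *
        (Real.exp (-(1/8 * p.2.1 ^ 2) + 0 * p.2.1) *
          Real.exp (-(1/6 * p.2.2 ^ 2) + (x + y) * p.2.2))) := by
    exact (integrable_expQuad (1/8) 0 (by norm_num)).mul_prod
      ((integrable_expQuad (1/8) 0 (by norm_num)).mul_prod
        (integrable_expQuad (1/6) (x + y) (by norm_num)))
  refine hb.mono ((Gfun_cont x y).aestronglyMeasurable) ?_
  refine Filter.Eventually.of_forall fun p => ?_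
  rw [Real.norm_eq_abs, Real.norm_eq_abs, abs_of_pos (by unfold Gfun; positivity),
    abs_of_pos (by positivity)]
  unfold Gfun
  simp only [← Real.exp_add]
  refine Real.exp_le_exp.2 ?_
  nlinarith [sq_nonneg (3 * p.1 - 4 * p.2.2), sq_nonneg (3 * p.2.1 - 4 * p.2.2)]

lemma Gfun_slice_integrable (x y u : ℝ) :
    Integrable (fun q : ℝ × ℝ => Gfun x y (u, q)) := by
  have hb : Integrable (fun q : ℝ × ℝ =>
      Real.exp (-(1/8 * q.1 ^ 2) + 0 * q.1) *
        Real.exp (-(5/6 * q.2 ^ 2) + (u + x + y) * q.2)) := by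
    exact (integrable_expQuad (1/8) 0 (by norm_num)).mul_prod
      (integrable_expQuad (5/6) (u + x + y) (by norm_num))
  refine hb.mono ?_ ?_
  · exact (((Gfun_cont x y).comp (by fun_prop : Continuous fun q : ℝ × ℝ =>
      ((u, q) : ℝ × ℝ × ℝ))).aestronglyMeasurable)
  refine Filter.Eventually.of_forall fun q => ?_
  rw [Real.norm_eq_abs, Real.norm_eq_abs, abs_of_pos (by unfold Gfun; positivity),
    abs_of_pos (by positivity)]
  unfold Gfun
  simp only [← Real.exp_add]
  refine Real.exp_le_exp.2 ?_
  nlinarith [sq_nonneg (3 * q.1 - 4 * q.2), sq_nonneg u]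

lemma Gfun_integral (x y : ℝ) :
    (∫ p : ℝ × ℝ × ℝ, Gfun x y p) =
      Real.sqrt (π / (3/2)) * Real.sqrt (π / (1/3)) * Real.sqrt (π / (1/4)) *
        Real.exp ((x + y) ^ 2 / 2) := by
  rw [show (volume : Measure (ℝ × ℝ × ℝ)) =
      (volume : Measure ℝ).prod (volume : Measure (ℝ × ℝ)) from rfl]
  rw [integral_prod _ (Gfun_integrable x y)]
  have h2 : ∀ u : ℝ, (∫ q : ℝ × ℝ, Gfun x y (u, q)) =
      ∫ v : ℝ, ∫ w : ℝ, Gfun x y (u, (v, w)) := by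
    intro u
    rw [show (volume : Measure (ℝ × ℝ)) =
      (volume : Measure ℝ).prod (volume : Measure ℝ) from rfl]
    exact integral_prod _ (Gfun_slice_integrable x y u)
  simp only [h2]
  have h3 : ∀ u v : ℝ, (∫ w : ℝ, Gfun x y (u, (v, w))) =
      Real.exp (-(u ^ 2 / 2) + -(v ^ 2 / 2)) *
        (Real.sqrt (π / (3/2)) * Real.exp ((u + v + x + y) ^ 2 / (4 * (3/2)))) := by
    intro u v
    have he : (fun w : ℝ => Gfun x y (u, (v, w))) =
        fun w : ℝ => Real.exp (-(u ^ 2 / 2) + -(v ^ 2 / 2)) *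
          Real.exp (-(3/2 * w ^ 2) + (u + v + x + y) * w) := by
      funext w
      unfold Gfun
      simp only [← Real.exp_add]
      rw [Real.exp_eq_exp]
      ring
    rw [he, integral_const_mul, integral_expQuad (3/2) (u + v + x + y) (by norm_num)]
  simp only [h3]
  have h4 : ∀ u : ℝ, (∫ v : ℝ, Real.exp (-(u ^ 2 / 2) + -(v ^ 2 / 2)) *
      (Real.sqrt (π / (3/2)) * Real.exp ((u + v + x + y) ^ 2 / (4 * (3/2))))) =
      Real.sqrt (π / (3/2)) * Real.exp (-(u ^ 2 / 2) + (u + x + y) ^ 2 / 6) *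
        (Real.sqrt (π / (1/3)) * Real.exp (((u + x + y) / 3) ^ 2 / (4 * (1/3)))) := by
    intro u
    have he : (fun v : ℝ => Real.exp (-(u ^ 2 / 2) + -(v ^ 2 / 2)) *
        (Real.sqrt (π / (3/2)) * Real.exp ((u + v + x + y) ^ 2 / (4 * (3/2))))) =
        fun v : ℝ => Real.sqrt (π / (3/2)) * Real.exp (-(u ^ 2 / 2) + (u + x + y) ^ 2 / 6) *
          Real.exp (-(1/3 * v ^ 2) + ((u + x + y) / 3) * v) := by
      funext v
      exact exp_shuffle _ _ _ _ _ (by ring)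
    rw [he, integral_const_mul, integral_expQuad (1/3) ((u + x + y) / 3) (by norm_num)]
  simp only [h4]
  have he : (fun u : ℝ => Real.sqrt (π / (3/2)) * Real.exp (-(u ^ 2 / 2) + (u + x + y) ^ 2 / 6) *
      (Real.sqrt (π / (1/3)) * Real.exp (((u + x + y) / 3) ^ 2 / (4 * (1/3))))) =
      fun u : ℝ => Real.sqrt (π / (3/2)) * Real.sqrt (π / (1/3)) *
        Real.exp ((x + y) ^ 2 / 4) * Real.exp (-(1/4 * u ^ 2) + ((x + y) / 2) * u) := by
    funext u
    exact exp_shuffle2 _ _ _ _ _ _ (by ring)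
  rw [he, integral_const_mul, integral_expQuad (1/4) ((x + y) / 2) (by norm_num)]
  rw [exp_shuffle3 _ _ _ _ _ (show (x + y) ^ 2 / 4 + ((x + y) / 2) ^ 2 / (4 * (1/4)) =
    (x + y) ^ 2 / 2 by ring)]

/-- The constant in `gRatio 0 0 x y = C0 * exp ((x+y)^2/2)`. -/
noncomputable def C0 : ℝ :=
  (Real.sqrt (2 * π))⁻¹ ^ 3 *
    (Real.sqrt (π / (3/2)) * Real.sqrt (π / (1/3)) * Real.sqrt (π / (1/4)))

lemma C0_pos : 0 < C0 := by unfold C0; positivity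

lemma gRatio_eval (x y : ℝ) : gRatio 0 0 x y = C0 * Real.exp ((x + y) ^ 2 / 2) := by
  unfold gRatio
  have hfun : (fun p : ℝ × ℝ × ℝ =>
      gaussPdf (p.1 + x) (p.2.2 + 0) 1 * gaussPdf (p.2.1 + y) (p.2.2 + 0) 1 /
        (gaussPdf (p.1 + x) 0 1 * gaussPdf (p.2.1 + y) 0 1) *
      (gaussPdf p.1 0 (1 - 0) * gaussPdf p.2.1 0 (1 - 0) * gaussPdf p.2.2 0 (1 - 0))) =
      fun p : ℝ × ℝ × ℝ => (Real.sqrt (2 * π))⁻¹ ^ 3 * Gfun x y p := by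
    funext p
    unfold Gfun
    simp only [gaussPdf, mul_one, sub_zero, add_zero]
    rw [← Real.exp_add, ← Real.exp_add]
    exact collect _ _ _ _ _ _ _ _ _ (by positivity) (by ring)
  rw [hfun, integral_const_mul, Gfun_integral, C0]
  ring

/-- The function `g(x,y) = gRatio t z x y` does not factor as a product `g₁(x)·g₂(y)` in
general: there exist `t ∈ [0,1)`, `z`, and points `x, y, x', y'` with
`g(x,y)·g(x',y') ≠ g(x,y')·g(x',y)`. The heat semigroup destroys conditional independence
structure (Remark 1 of the paper). -/
theorem heat_semigroup_breaks_conditional_independence :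
    ∃ (t z : ℝ), 0 ≤ t ∧ t < 1 ∧ ∃ x y x' y' : ℝ,
      gRatio t z x y * gRatio t z x' y' ≠ gRatio t z x y' * gRatio t z x' y := by
  refine ⟨0, 0, le_refl 0, by norm_num, 1, 1, 0, 0, ?_⟩
  rw [gRatio_eval, gRatio_eval, gRatio_eval, gRatio_eval]
  intro h
  have h2 : Real.exp ((1 + 1 : ℝ) ^ 2 / 2) * Real.exp ((0 + 0 : ℝ) ^ 2 / 2) =
      Real.exp ((1 + 0 : ℝ) ^ 2 / 2) * Real.exp ((0 + 1 : ℝ) ^ 2 / 2) := by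
    have hc : (C0 : ℝ) ^ 2 ≠ 0 := (pow_pos C0_pos 2).ne'
    apply mul_left_cancel₀ hc
    linear_combination h
  rw [← Real.exp_add, ← Real.exp_add, Real.exp_eq_exp] at h2
  norm_num at h2
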